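/- Let S be a finite set, d a positive integer, and let ψ : S → ℝ^d be a random map such that the d·|S| coordinates {ψ(s)_i : s ∈ S, 1 ≤ i ≤ d} are independent and each is uniformly distributed on {−1/√d, +1/√d}. For arbitrary subsets A, B ⊆ S, define the random vectors a = Σ_{x ∈ A} ψ(x) and b = Σ_{y ∈ B} ψ(y). Then the variance of the dot product satisfies Var[a · b] = (1/d)(|A|·|B| + |A ∩ B|² − 2|A ∩ B|). -/

import Mathlib

open MeasureTheory ProbabilityTheory

lemma pm_moment {Ω : Type*} [MeasurableSpace Ω] (μ : Measure Ω) [IsProbabilityMeasure μ]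
    {Z : Ω → ℝ} (hZ : Measurable Z) {c : ℝ} (hc : 0 < c)
    (h1 : μ {ω | Z ω = c} = 1/2) (h2 : μ {ω | Z ω = -c} = 1/2) :
    (∀ᵐ ω ∂μ, |Z ω| ≤ c) ∧ ∀ k : ℕ, ∫ ω, (Z ω)^k ∂μ = (c^k + (-c)^k)/2 := by
  have hcne : c ≠ -c := by intro h; linarith
  have mp : MeasurableSet {ω | Z ω = c} := hZ (measurableSet_singleton c)
  have mn : MeasurableSet {ω | Z ω = -c} := hZ (measurableSet_singleton (-c))
  have hdisj : Disjoint {ω | Z ω = c} {ω | Z ω = -c} := by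
    rw [Set.disjoint_left]
    intro ω hω hω'
    exact hcne (hω ▸ hω')
  have hu : μ ({ω | Z ω = c} ∪ {ω | Z ω = -c}) = 1 := by
    rw [measure_union hdisj mn, h1, h2]
    rw [ENNReal.div_add_div_same]
    rw [one_add_one_eq_two]
    exact ENNReal.div_self two_ne_zero ENNReal.ofNat_ne_top
  have hae : ∀ᵐ ω ∂μ, ω ∈ {ω | Z ω = c} ∪ {ω | Z ω = -c} := by
    have hcompl : μ ({ω | Z ω = c} ∪ {ω | Z ω = -c})ᶜ = 0 := by
      rw [measure_compl (mp.union mn) (measure_ne_top μ _), hu, measure_univ]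
      simp
    rw [ae_iff]
    exact hcompl
  constructor
  · filter_upwards [hae] with ω hω
    rcases hω with h | h
    · rw [Set.mem_setOf_eq] at h; rw [h, abs_of_pos hc]
    · rw [Set.mem_setOf_eq] at h; rw [h, abs_neg, abs_of_pos hc]
  · intro k
    have heq : (fun ω => (Z ω)^k) =ᵐ[μ]
        ({ω | Z ω = c}.indicator (fun _ => c^k) + {ω | Z ω = -c}.indicator (fun _ => (-c)^k)) := by
      filter_upwards [hae] with ω hω
      rcases hω with h | h
      · rw [Set.mem_setOf_eq] at h
        have hnot : ω ∉ {ω | Z ω = -c} := by rw [Set.mem_setOf_eq, h]; exact hcne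
        simp [Set.indicator_of_mem h, Set.indicator_of_notMem hnot, h]
      · rw [Set.mem_setOf_eq] at h
        have hnot : ω ∉ {ω | Z ω = c} := by
          rw [Set.mem_setOf_eq, h]; intro hh; exact hcne hh.symm
        simp [Set.indicator_of_mem h, Set.indicator_of_notMem hnot, h]
    rw [integral_congr_ae heq]
    have i1 : Integrable ({ω | Z ω = c}.indicator (fun _ => c^k)) μ := by
      rw [integrable_indicator_iff mp]; exact integrableOn_const (measure_ne_top μ _)
    have i2 : Integrable ({ω | Z ω = -c}.indicator (fun _ => (-c)^k)) μ := by
      rw [integrable_indicator_iff mn]; exact integrableOn_const (measure_ne_top μ _)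
    simp only [Pi.add_apply]
    rw [integral_add i1 i2, integral_indicator_const _ mp, integral_indicator_const _ mn, measureReal_def, measureReal_def, h1, h2]
    have : ((1:ENNReal)/2).toReal = (1:ℝ)/2 := by
      rw [ENNReal.toReal_div]; simp
    rw [this]
    simp only [smul_eq_mul]
    ring

lemma indep_integral_prod_pow {Ω ι : Type*} [MeasurableSpace Ω] (μ : Measure Ω)
    [IsProbabilityMeasure μ]
    {Y : ι → Ω → ℝ} (hm : ∀ i, Measurable (Y i))
    (hind : iIndepFun Y μ) (f : ι → ℕ) (s : Finset ι) :
    ∫ ω, ∏ p ∈ s, (Y p ω)^(f p) ∂μ = ∏ p ∈ s, ∫ ω, (Y p ω)^(f p) ∂μ := by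
  classical
  induction s using Finset.induction_on with
  | empty => simp
  | @insert a s ha ih =>
    have hgm : ∀ p, Measurable (fun ω => Y p ω ^ f p) := fun p => (hm p).pow_const _
    have hgind : iIndepFun (fun p ω => Y p ω ^ f p) μ :=
      hind.comp (fun p x => x ^ f p) (fun p => measurable_id.pow_const _)
    have hIndep : IndepFun (∏ j ∈ s, fun ω => Y j ω ^ f j) (fun ω => Y a ω ^ f a) μ :=
      hgind.indepFun_finset_prod_of_notMem hgm ha
    have hFeq : (∏ j ∈ s, fun ω => Y j ω ^ f j) = fun ω => ∏ j ∈ s, Y j ω ^ f j := by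
      funext ω; rw [Finset.prod_apply]
    rw [hFeq] at hIndep
    have key := hIndep.integral_mul_eq_mul_integral
      ((Finset.measurable_prod s (fun j _ => hgm j)).aestronglyMeasurable)
      (hgm a).aestronglyMeasurable
    have e1 : ((fun ω => ∏ j ∈ s, Y j ω ^ f j) * fun ω => Y a ω ^ f a)
        = fun ω => ∏ p ∈ insert a s, (Y p ω)^(f p) := by
      funext ω
      rw [Pi.mul_apply, Finset.prod_insert ha, mul_comm]
    rw [e1] at key
    rw [key, Finset.prod_insert ha, ih]
    ring

section
variable {Ω ι : Type*} [MeasurableSpace Ω] {μ : Measure Ω} [IsProbabilityMeasure μ]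
  [Fintype ι] [DecidableEq ι] {Y : ι → Ω → ℝ} {c : ℝ}

lemma helper_prod_pow_ite (g : ι → ℝ) (p : ι) :
    ∏ u, g u ^ (if u = p then 1 else 0) = g p := by
  have h : ∀ u, g u ^ (if u = p then (1:ℕ) else 0) = if u = p then g u else 1 := by
    intro u; split <;> simp
  simp_rw [h]
  rw [Finset.prod_ite_eq']
  simp


lemma odd_witness (p q r t : ι)
    (h : ¬((p = q ∧ r = t) ∨ (p = r ∧ q = t) ∨ (p = t ∧ q = r))) :
    ∃ u, ¬ Even ((if u = p then 1 else 0) + (if u = q then 1 else 0)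
      + (if u = r then 1 else 0) + (if u = t then 1 else 0) : ℕ) := by
  by_contra h'
  push_neg at h'
  have hp := h' p
  have hq := h' q
  have hr := h' r
  have ht := h' t
  by_cases hpq : p = q <;> by_cases hpr : p = r <;> by_cases hpt : p = t <;>
    by_cases hqr : q = r <;> by_cases hqt : q = t <;> by_cases hrt : r = t <;>
    simp_all [parity_simps]

lemma two_prod (hm : ∀ i, Measurable (Y i))
    (hind : iIndepFun Y μ) (hc : 0 < c)
    (hmom : ∀ u (k : ℕ), ∫ ω, (Y u ω)^k ∂μ = (c^k + (-c)^k)/2) (p q : ι) :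
    ∫ ω, Y p ω * Y q ω ∂μ = if p = q then c^2 else 0 := by
  set f : ι → ℕ := fun u => (if u = p then 1 else 0) + (if u = q then 1 else 0) with hf
  have hpt : ∀ ω, Y p ω * Y q ω = ∏ u, (Y u ω)^(f u) := by
    intro ω
    simp_rw [hf, pow_add, Finset.prod_mul_distrib, helper_prod_pow_ite]
  calc ∫ ω, Y p ω * Y q ω ∂μ = ∫ ω, ∏ u, (Y u ω)^(f u) ∂μ := by simp_rw [hpt]
    _ = ∏ u, ∫ ω, (Y u ω)^(f u) ∂μ := indep_integral_prod_pow μ hm hind f Finset.univ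
    _ = ∏ u, ((c^(f u) + (-c)^(f u))/2) := Finset.prod_congr rfl fun u _ => hmom u (f u)
    _ = if p = q then c^2 else 0 := ?_
  by_cases hpq : p = q
  · rw [if_pos hpq]
    have h : ∀ u, ((c^(f u) + (-c)^(f u))/2) = if u = p then c^2 else 1 := by
      intro u
      by_cases h : u = p <;> simp [hf, h, ← hpq] <;> ring
    simp_rw [h]
    rw [Finset.prod_ite_eq']
    simp
  · rw [if_neg hpq]
    apply Finset.prod_eq_zero (Finset.mem_univ p)
    have : f p = 1 := by simp [hf, hpq]
    rw [this]
    ring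

lemma four_prod (hm : ∀ i, Measurable (Y i))
    (hind : iIndepFun Y μ) (hc : 0 < c)
    (hmom : ∀ u (k : ℕ), ∫ ω, (Y u ω)^k ∂μ = (c^k + (-c)^k)/2) (p q r t : ι) :
    ∫ ω, Y p ω * Y q ω * Y r ω * Y t ω ∂μ =
      if (p = q ∧ r = t) ∨ (p = r ∧ q = t) ∨ (p = t ∧ q = r) then c^4 else 0 := by
  set f : ι → ℕ := fun u => (if u = p then 1 else 0) + (if u = q then 1 else 0)
      + (if u = r then 1 else 0) + (if u = t then 1 else 0) with hf
  have hpt : ∀ ω, Y p ω * Y q ω * Y r ω * Y t ω = ∏ u, (Y u ω)^(f u) := by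
    intro ω
    simp_rw [hf, pow_add, Finset.prod_mul_distrib, helper_prod_pow_ite]
  have pair : ∀ (a b : ι) (g : ι → ℕ),
      (∀ u, g u = (if u = a then 2 else 0) + (if u = b then 2 else 0)) →
      ∏ u, ((c^(g u) + (-c)^(g u))/2) = c^4 := by
    intro a b g hg
    by_cases hab : a = b
    · have h : ∀ u, ((c^(g u) + (-c)^(g u))/2) = if u = a then c^4 else 1 := by
        intro u
        by_cases h : u = a <;> simp [hg, h, ← hab] <;> ring
      simp_rw [h]
      rw [Finset.prod_ite_eq']
      simp
    · have h : ∀ u, ((c^(g u) + (-c)^(g u))/2) =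
          (if u = a then c^2 else 1) * (if u = b then c^2 else 1) := by
        intro u
        by_cases h1 : u = a
        · have h2 : u ≠ b := fun h => hab (h1.symm.trans h)
          simp [hg, h1, h2, hab, Ne.symm hab]
        · by_cases h2 : u = b
          · simp [hg, h1, h2, hab, Ne.symm hab]
          · simp [hg, h1, h2, hab, Ne.symm hab]
      simp_rw [h, Finset.prod_mul_distrib]
      rw [Finset.prod_ite_eq', Finset.prod_ite_eq']
      simp
      ring
  calc ∫ ω, Y p ω * Y q ω * Y r ω * Y t ω ∂μ = ∫ ω, ∏ u, (Y u ω)^(f u) ∂μ := by simp_rw [hpt]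
    _ = ∏ u, ∫ ω, (Y u ω)^(f u) ∂μ := indep_integral_prod_pow μ hm hind f Finset.univ
    _ = ∏ u, ((c^(f u) + (-c)^(f u))/2) := Finset.prod_congr rfl fun u _ => hmom u (f u)
    _ = if (p = q ∧ r = t) ∨ (p = r ∧ q = t) ∨ (p = t ∧ q = r) then c^4 else 0 := ?_
  by_cases hcond : (p = q ∧ r = t) ∨ (p = r ∧ q = t) ∨ (p = t ∧ q = r)
  · rw [if_pos hcond]
    rcases hcond with ⟨h1, h2⟩ | ⟨h1, h2⟩ | ⟨h1, h2⟩
    · exact pair p r f (fun u => by simp only [hf, ← h1, ← h2]; split_ifs <;> omega)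
    · exact pair p q f (fun u => by simp only [hf, ← h1, ← h2]; split_ifs <;> omega)
    · exact pair p q f (fun u => by simp only [hf, ← h1, ← h2]; split_ifs <;> omega)
  · rw [if_neg hcond]
    obtain ⟨u, hu⟩ := odd_witness p q r t hcond
    apply Finset.prod_eq_zero (Finset.mem_univ u)
    have hodd : Odd (f u) := Nat.not_even_iff_odd.1 hu
    rw [hodd.neg_pow]
    ring
end


lemma ind_ie (P Q R W : Prop) [Decidable P] [Decidable Q] [Decidable R] [Decidable W] (v : ℝ)
    (hPQ : P ∧ Q ↔ W) (hPR : P ∧ R ↔ W) (hQR : Q ∧ R ↔ W) :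
    (if P ∨ Q ∨ R then v else 0)
      = (if P then v else 0) + (if Q then v else 0) + (if R then v else 0)
        - 2 * (if W then v else 0) := by
  by_cases hP : P <;> by_cases hQ : Q <;> by_cases hR : R <;> by_cases hW : W <;>
    simp_all <;> ring

lemma sum_ite_const {α : Type*} (s : Finset α) (P : Prop) [Decidable P] (f : α → ℝ) :
    (∑ x ∈ s, if P then f x else 0) = if P then ∑ x ∈ s, f x else 0 := by
  split_ifs <;> simp

lemma big_count {S : Type*} [DecidableEq S] (d : ℕ) (A B : Finset S) (v : ℝ) :
    (∑ i : Fin d, ∑ x ∈ A, ∑ y ∈ B, ∑ j : Fin d, ∑ x' ∈ A, ∑ y' ∈ B,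
      (if (x = y ∧ x' = y') ∨ (i = j ∧ x = x' ∧ y = y') ∨ (i = j ∧ x = y' ∧ y = x')
        then v else 0))
    = ((d:ℝ)^2 * ((A ∩ B).card:ℝ)^2 + d * (A.card * B.card) + d * ((A ∩ B).card:ℝ)^2
        - 2 * (d * ((A ∩ B).card:ℝ))) * v := by
  have step : ∀ (i j : Fin d) (x y x' y' : S),
      (if (x = y ∧ x' = y') ∨ (i = j ∧ x = x' ∧ y = y') ∨ (i = j ∧ x = y' ∧ y = x')
        then v else 0)
      = (if x = y ∧ x' = y' then v else 0) + (if i = j ∧ x = x' ∧ y = y' then v else 0)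
        + (if i = j ∧ x = y' ∧ y = x' then v else 0)
        - 2 * (if i = j ∧ x = y ∧ x' = y ∧ y' = y then v else 0) := by
    intro i j x y x' y'
    apply ind_ie <;> constructor <;> intro h <;> aesop
  simp_rw [step]
  simp only [Finset.sum_add_distrib, Finset.sum_sub_distrib, ← Finset.mul_sum, ite_and,
    sum_ite_const, Finset.sum_ite_eq, Finset.sum_ite_eq', Finset.sum_ite_mem,
    Finset.inter_self, Finset.sum_const, Finset.card_univ, Fintype.card_fin, nsmul_eq_mul]
  have h1 : B ∩ A = A ∩ B := Finset.inter_comm B A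
  have h2 : A ∩ B ∩ A ∩ B = A ∩ B := by
    ext z; simp only [Finset.mem_inter]; tauto
  rw [h1, h2]
  ring



/-- The variance of the dot product of DotHash sketches satisfies
`Var[a · b] = (1/d)(|A|·|B| + |A ∩ B|² − 2|A ∩ B|)`. -/
theorem dothash_variance_dot
    {Ω : Type*} [MeasurableSpace Ω] (μ : Measure Ω) [IsProbabilityMeasure μ]
    {S : Type*} [Fintype S] [DecidableEq S]
    (d : ℕ) (hd : 0 < d)
    (ψ : Ω → S → Fin d → ℝ)
    (hmeas : ∀ (s : S) (i : Fin d), Measurable fun ω => ψ ω s i)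
    (hindep : iIndepFun
      (fun (p : S × Fin d) ω => ψ ω p.1 p.2) μ)
    (hunif : ∀ (s : S) (i : Fin d),
      μ {ω | ψ ω s i = 1 / Real.sqrt d} = 1/2 ∧
      μ {ω | ψ ω s i = -(1 / Real.sqrt d)} = 1/2)
    (A B : Finset S) :
    variance (fun ω => ∑ i, (∑ x ∈ A, ψ ω x i) * (∑ y ∈ B, ψ ω y i)) μ
      = (1 / (d : ℝ)) * ((A.card : ℝ) * (B.card : ℝ)
          + ((A ∩ B).card : ℝ) ^ 2 - 2 * ((A ∩ B).card : ℝ)) := by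
  classical
  set c : ℝ := 1 / Real.sqrt d with hcdef
  have hd0 : (d:ℝ) ≠ 0 := Nat.cast_ne_zero.2 hd.ne'
  have hsq : 0 < Real.sqrt d := Real.sqrt_pos.2 (by exact_mod_cast hd)
  have hc : 0 < c := by positivity
  have hc2 : c^2 = 1/(d:ℝ) := by
    rw [hcdef, div_pow, one_pow, Real.sq_sqrt (Nat.cast_nonneg d)]
  set Y : S × Fin d → Ω → ℝ := fun p ω => ψ ω p.1 p.2 with hYdef
  have hYm : ∀ p, Measurable (Y p) := fun p => hmeas p.1 p.2
  have hpm := fun p : S × Fin d =>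
    pm_moment μ (hYm p) hc ((hunif p.1 p.2).1) ((hunif p.1 p.2).2)
  have hbdd : ∀ p, ∀ᵐ ω ∂μ, |Y p ω| ≤ c := fun p => (hpm p).1
  have hmom : ∀ p (k : ℕ), ∫ ω, (Y p ω)^k ∂μ = (c^k + (-c)^k)/2 := fun p => (hpm p).2
  have hint2 : ∀ p q : S × Fin d, Integrable (fun ω => Y p ω * Y q ω) μ := by
    intro p q
    refine Integrable.mono' (integrable_const (c*c))
      (((hYm p).mul (hYm q)).aestronglyMeasurable) ?_
    filter_upwards [hbdd p, hbdd q] with ω h1 h2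
    rw [Real.norm_eq_abs, abs_mul]
    exact mul_le_mul h1 h2 (abs_nonneg _) hc.le
  have hint4 : ∀ p q r s : S × Fin d,
      Integrable (fun ω => (Y p ω * Y q ω) * (Y r ω * Y s ω)) μ := by
    intro p q r s
    refine Integrable.mono' (integrable_const ((c*c)*(c*c)))
      ((((hYm p).mul (hYm q)).mul ((hYm r).mul (hYm s))).aestronglyMeasurable) ?_
    filter_upwards [hbdd p, hbdd q, hbdd r, hbdd s] with ω h1 h2 h3 h4
    rw [Real.norm_eq_abs, abs_mul, abs_mul, abs_mul]
    have e1 : |Y p ω| * |Y q ω| ≤ c*c := mul_le_mul h1 h2 (abs_nonneg _) hc.le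
    have e2 : |Y r ω| * |Y s ω| ≤ c*c := mul_le_mul h3 h4 (abs_nonneg _) hc.le
    exact mul_le_mul e1 e2 (by positivity) (by positivity)
  have hXX' : (fun ω => ∑ i, (∑ x ∈ A, ψ ω x i) * (∑ y ∈ B, ψ ω y i))
      = fun ω => ∑ i, ∑ x ∈ A, ∑ y ∈ B, ψ ω x i * ψ ω y i := by
    funext ω
    simp_rw [Finset.sum_mul_sum]
  rw [hXX']
  have hEterm : ∀ (i : Fin d) (x y : S),
      ∫ ω, ψ ω x i * ψ ω y i ∂μ = if x = y then c^2 else 0 := by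
    intro i x y
    have h : (∫ ω, ψ ω x i * ψ ω y i ∂μ) = if (x,i) = (y,i) then c^2 else 0 :=
      two_prod hYm hindep hc hmom (x,i) (y,i)
    rw [h]
    simp [Prod.ext_iff]
  have I2 : ∀ (i : Fin d) (x y : S), Integrable (fun ω => ψ ω x i * ψ ω y i) μ :=
    fun i x y => hint2 (x,i) (y,i)
  have EX : ∫ ω, (∑ i, ∑ x ∈ A, ∑ y ∈ B, ψ ω x i * ψ ω y i) ∂μ = ((A∩B).card : ℝ) := by
    rw [integral_finset_sum _ (fun i _ => integrable_finset_sum _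
      (fun x _ => integrable_finset_sum _ (fun y _ => I2 i x y)))]
    have : ∀ i : Fin d, ∫ ω, (∑ x ∈ A, ∑ y ∈ B, ψ ω x i * ψ ω y i) ∂μ
        = ∑ x ∈ A, ∑ y ∈ B, (if x = y then c^2 else 0) := by
      intro i
      rw [integral_finset_sum _ (fun x _ => integrable_finset_sum _ (fun y _ => I2 i x y))]
      refine Finset.sum_congr rfl fun x _ => ?_
      rw [integral_finset_sum _ (fun y _ => I2 i x y)]
      exact Finset.sum_congr rfl fun y _ => hEterm i x y
    rw [Finset.sum_congr rfl (fun i _ => this i)]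
    simp only [Finset.sum_ite_eq, Finset.sum_ite_mem, Finset.sum_const,
      Finset.card_univ, Fintype.card_fin, nsmul_eq_mul]
    rw [hc2]
    field_simp
  have hE4 : ∀ (i j : Fin d) (x y x' y' : S),
      ∫ ω, (ψ ω x i * ψ ω y i) * (ψ ω x' j * ψ ω y' j) ∂μ
      = if (x = y ∧ x' = y') ∨ (i = j ∧ x = x' ∧ y = y') ∨ (i = j ∧ x = y' ∧ y = x')
        then c^4 else 0 := by
    intro i j x y x' y'
    have heq : (fun ω => (ψ ω x i * ψ ω y i) * (ψ ω x' j * ψ ω y' j))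
        = fun ω => Y (x,i) ω * Y (y,i) ω * Y (x',j) ω * Y (y',j) ω := by
      funext ω; simp only [hYdef]; ring
    rw [show (∫ ω, (ψ ω x i * ψ ω y i) * (ψ ω x' j * ψ ω y' j) ∂μ)
        = ∫ ω, Y (x,i) ω * Y (y,i) ω * Y (x',j) ω * Y (y',j) ω ∂μ from by rw [heq]]
    rw [four_prod hYm hindep hc hmom (x,i) (y,i) (x',j) (y',j)]
    refine if_congr ?_ rfl rfl
    simp only [Prod.mk.injEq]
    constructor <;> intro h <;> tauto
  have I4 : ∀ (i j : Fin d) (x y x' y' : S),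
      Integrable (fun ω => (ψ ω x i * ψ ω y i) * (ψ ω x' j * ψ ω y' j)) μ :=
    fun i j x y x' y' => hint4 (x,i) (y,i) (x',j) (y',j)
  have hXsq : ∀ ω : Ω, (∑ i, ∑ x ∈ A, ∑ y ∈ B, ψ ω x i * ψ ω y i)^2
      = ∑ i, ∑ x ∈ A, ∑ y ∈ B, ∑ j, ∑ x' ∈ A, ∑ y' ∈ B,
          (ψ ω x i * ψ ω y i) * (ψ ω x' j * ψ ω y' j) := by
    intro ω
    rw [sq]
    simp_rw [Finset.sum_mul, Finset.mul_sum]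
  have EX2 : ∫ ω, (∑ i, ∑ x ∈ A, ∑ y ∈ B, ψ ω x i * ψ ω y i)^2 ∂μ
      = ((d:ℝ)^2 * ((A ∩ B).card:ℝ)^2 + d * (A.card * B.card) + d * ((A ∩ B).card:ℝ)^2
          - 2 * (d * ((A ∩ B).card:ℝ))) * c^4 := by
    simp_rw [hXsq]
    rw [integral_finset_sum _ (fun i _ => integrable_finset_sum _ (fun x _ =>
      integrable_finset_sum _ (fun y _ => integrable_finset_sum _ (fun j _ =>
      integrable_finset_sum _ (fun x' _ => integrable_finset_sum _ (fun y' _ =>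
      I4 i j x y x' y'))))))]
    rw [← big_count d A B (c^4)]
    refine Finset.sum_congr rfl fun i _ => ?_
    rw [integral_finset_sum _ (fun x _ => integrable_finset_sum _ (fun y _ =>
      integrable_finset_sum _ (fun j _ => integrable_finset_sum _ (fun x' _ =>
      integrable_finset_sum _ (fun y' _ => I4 i j x y x' y')))))]
    refine Finset.sum_congr rfl fun x _ => ?_
    rw [integral_finset_sum _ (fun y _ => integrable_finset_sum _ (fun j _ =>
      integrable_finset_sum _ (fun x' _ => integrable_finset_sum _ (fun y' _ =>
      I4 i j x y x' y'))))]
    refine Finset.sum_congr rfl fun y _ => ?_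
    rw [integral_finset_sum _ (fun j _ => integrable_finset_sum _ (fun x' _ =>
      integrable_finset_sum _ (fun y' _ => I4 i j x y x' y')))]
    refine Finset.sum_congr rfl fun j _ => ?_
    rw [integral_finset_sum _ (fun x' _ => integrable_finset_sum _ (fun y' _ =>
      I4 i j x y x' y'))]
    refine Finset.sum_congr rfl fun x' _ => ?_
    rw [integral_finset_sum _ (fun y' _ => I4 i j x y x' y')]
    exact Finset.sum_congr rfl fun y' _ => hE4 i j x y x' y'
  have hMem : MemLp (fun ω => ∑ i, ∑ x ∈ A, ∑ y ∈ B, ψ ω x i * ψ ω y i) 2 μ := by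
    refine MemLp.of_bound ?_ ((d:ℝ) * ((A.card:ℝ) * ((B.card:ℝ) * (c*c)))) ?_
    · exact (Finset.measurable_sum _ fun i _ => Finset.measurable_sum _ fun x _ =>
        Finset.measurable_sum _ fun y _ => (hmeas x i).mul (hmeas y i)).aestronglyMeasurable
    · have hball : ∀ᵐ ω ∂μ, ∀ p : S × Fin d, |Y p ω| ≤ c := ae_all_iff.2 hbdd
      filter_upwards [hball] with ω hω
      rw [Real.norm_eq_abs]
      calc |∑ i, ∑ x ∈ A, ∑ y ∈ B, ψ ω x i * ψ ω y i|
          ≤ ∑ i : Fin d, ∑ x ∈ A, ∑ y ∈ B, c*c := by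
            refine (Finset.abs_sum_le_sum_abs _ _).trans (Finset.sum_le_sum fun i _ => ?_)
            refine (Finset.abs_sum_le_sum_abs _ _).trans (Finset.sum_le_sum fun x _ => ?_)
            refine (Finset.abs_sum_le_sum_abs _ _).trans (Finset.sum_le_sum fun y _ => ?_)
            rw [abs_mul]
            exact mul_le_mul (hω (x,i)) (hω (y,i)) (abs_nonneg _) hc.le
        _ = (d:ℝ) * ((A.card:ℝ) * ((B.card:ℝ) * (c*c))) := by
            simp [Finset.sum_const, Finset.card_univ, Fintype.card_fin, nsmul_eq_mul]
  rw [variance_eq_sub hMem]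
  simp only [Pi.pow_apply]
  rw [EX2, EX]
  have hc4 : c^4 = (1/(d:ℝ))*(1/(d:ℝ)) := by
    rw [show c^4 = c^2 * c^2 from by ring, hc2]
  rw [hc4]
  field_simp
  ring
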